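/- arXiv:2203.01732 — 8 statements merged into one kernel-verified Lean document; each statement's English description precedes it below -/
import Mathlib

section
/- Let 𝒢 be symmetric positive semidefinite, 𝒜 have full row rank, and suppose 𝒢 is positive definite on ker 𝒜. Then for every b ∈ ℝ^m and c ∈ ℝ^n, the constrained minimization problem min { ½ xᵀ𝒢x + cᵀx : x ∈ ℝ^n, 𝒜x = b } has exactly one solution. -/
open Matrix

section Aux

variable {n m : ℕ}

private lemma dot_symm_aux (G : Matrix (Fin n) (Fin n) ℝ) (hGsym : G.IsSymm)
    (x u : Fin n → ℝ) : x ⬝ᵥ G.mulVec u = G.mulVec x ⬝ᵥ u := by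
  rw [Matrix.dotProduct_mulVec]
  congr 1
  rw [← Matrix.mulVec_transpose, hGsym.eq]

private lemma expand_aux (G : Matrix (Fin n) (Fin n) ℝ) (hGsym : G.IsSymm)
    (x u : Fin n → ℝ) :
    (x + u) ⬝ᵥ G.mulVec (x + u)
      = x ⬝ᵥ G.mulVec x + 2 * (G.mulVec x ⬝ᵥ u) + u ⬝ᵥ G.mulVec u := by
  simp only [Matrix.mulVec_add, dotProduct_add, add_dotProduct]
  have h1 := dot_symm_aux G hGsym x u
  have h2 : u ⬝ᵥ G.mulVec x = G.mulVec x ⬝ᵥ u := dotProduct_comm _ _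
  ring_nf
  linarith

end Aux

/-- Let `𝒢` be symmetric positive semidefinite, `𝒜` have full row rank,
and suppose `𝒢` is positive definite on `ker 𝒜`. Then for every `b` and `c`, the problem
`min { ½ xᵀ𝒢x + cᵀx : 𝒜x = b }` has exactly one solution. -/
theorem constrained_quadratic_unique_minimizer
    (n m : ℕ) (hn : 0 < n) (hm : 0 < m) (hmn : m ≤ n)
    (G : Matrix (Fin n) (Fin n) ℝ) (hGsym : G.IsSymm) (hGpsd : G.PosSemidef)
    (A : Matrix (Fin m) (Fin n) ℝ) (hA : Function.Surjective A.mulVec)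
    (hGker : ∀ x : Fin n → ℝ, x ≠ 0 → A.mulVec x = 0 → 0 < x ⬝ᵥ G.mulVec x)
    (b : Fin m → ℝ) (c : Fin n → ℝ) :
    ∃! x : Fin n → ℝ, A.mulVec x = b ∧
      ∀ y : Fin n → ℝ, A.mulVec y = b →
        (1 / 2) * (x ⬝ᵥ G.mulVec x) + c ⬝ᵥ x ≤ (1 / 2) * (y ⬝ᵥ G.mulVec y) + c ⬝ᵥ y := by
  obtain ⟨x0, hx0⟩ := hA b
  set K : Submodule ℝ (Fin n → ℝ) := LinearMap.ker A.mulVecLin with hK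
  -- the bilinear pairing as a map K → Dual K
  let φ : K →ₗ[ℝ] Module.Dual ℝ K :=
    { toFun := fun v =>
        { toFun := fun w => G.mulVec v.1 ⬝ᵥ w.1
          map_add' := by intro w₁ w₂; simp [dotProduct_add]
          map_smul' := by intro r w; simp [dotProduct_smul] }
      map_add' := by
        intro v₁ v₂; ext w; simp [Matrix.mulVec_add, add_dotProduct]
      map_smul' := by
        intro r v; ext w; simp [Matrix.mulVec_smul, smul_dotProduct] }
  have hφinj : Function.Injective φ := by
    rw [← LinearMap.ker_eq_bot, LinearMap.ker_eq_bot']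
    intro v hv
    by_contra hvne
    have hv1 : v.1 ≠ 0 := fun h => hvne (Subtype.ext h)
    have hvK : A.mulVec v.1 = 0 := v.2
    have hpos := hGker v.1 hv1 hvK
    have : G.mulVec v.1 ⬝ᵥ v.1 = 0 := by
      have := congrArg (fun f => f v) hv
      simpa [φ] using this
    rw [dot_symm_aux G hGsym v.1 v.1] at hpos
    linarith
  have hφsurj : Function.Surjective φ :=
    (LinearMap.injective_iff_surjective_of_finrank_eq_finrank
      (Subspace.dual_finrank_eq).symm).mp hφinj
  -- the linear functional to hit
  let ψ : Module.Dual ℝ K :=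
    { toFun := fun w => (G.mulVec x0 + c) ⬝ᵥ w.1
      map_add' := by intro w₁ w₂; simp [dotProduct_add]
      map_smul' := by intro r w; simp [dotProduct_smul] }
  obtain ⟨v, hv⟩ := hφsurj (-ψ)
  set xs : Fin n → ℝ := x0 + v.1 with hxs
  have hxsb : A.mulVec xs = b := by
    have hvK : A.mulVec v.1 = 0 := v.2
    simp [hxs, Matrix.mulVec_add, hx0, hvK]
  -- orthogonality: (G xs + c) ⬝ w = 0 for all w ∈ K
  have horth : ∀ w : Fin n → ℝ, A.mulVec w = 0 → (G.mulVec xs + c) ⬝ᵥ w = 0 := by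
    intro w hw
    have hwK : w ∈ K := hw
    have h1 := congrArg (fun f => f ⟨w, hwK⟩) hv
    simp only [φ, ψ, LinearMap.coe_mk, AddHom.coe_mk, LinearMap.neg_apply] at h1
    have : G.mulVec v.1 ⬝ᵥ w = -((G.mulVec x0 + c) ⬝ᵥ w) := h1
    simp only [hxs, Matrix.mulVec_add, add_dotProduct] at *
    linarith
  -- objective function
  set f : (Fin n → ℝ) → ℝ :=
    fun x => (1 / 2) * (x ⬝ᵥ G.mulVec x) + c ⬝ᵥ x with hf
  have key : ∀ y : Fin n → ℝ, A.mulVec y = b →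
      f y = f xs + (1 / 2) * ((y - xs) ⬝ᵥ G.mulVec (y - xs)) := by
    intro y hy
    have hyeq : y = xs + (y - xs) := by ring
    set u : Fin n → ℝ := y - xs with hu
    have huK : A.mulVec u = 0 := by
      simp [hu, Matrix.mulVec_sub, hy, hxsb]
    have h0 := horth u huK
    have hexp := expand_aux G hGsym xs u
    have hcy : c ⬝ᵥ y = c ⬝ᵥ xs + c ⬝ᵥ u := by
      rw [hyeq]; simp [dotProduct_add]
    have hq : y ⬝ᵥ G.mulVec y
        = xs ⬝ᵥ G.mulVec xs + 2 * (G.mulVec xs ⬝ᵥ u) + u ⬝ᵥ G.mulVec u := by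
      rw [hyeq]; exact hexp
    simp only [add_dotProduct] at h0
    simp only [hf, hq, hcy]
    linarith
  refine ⟨xs, ⟨hxsb, ?_⟩, ?_⟩
  · intro y hy
    have := key y hy
    have hpsd : (0:ℝ) ≤ (y - xs) ⬝ᵥ G.mulVec (y - xs) := by
      simpa using hGpsd.dotProduct_mulVec_nonneg (y - xs)
    have : f xs ≤ f y := by rw [this]; nlinarith [hpsd]
    simpa [hf] using this
  · intro y ⟨hyb, hymin⟩
    by_contra hne
    have hu : y - xs ≠ 0 := sub_ne_zero.mpr hne
    have huK : A.mulVec (y - xs) = 0 := by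
      simp [Matrix.mulVec_sub, hyb, hxsb]
    have hpos := hGker (y - xs) hu huK
    have h1 := key y hyb
    have h2 : f y ≤ f xs := hymin xs hxsb
    simp only [hf] at h1 h2 ⊢
    linarith
end

section
/- Assume that for every nonzero pair (Ψ_D, Ψ_Σ) ∈ ℝ^{N_D} × ℝ^{N_Σ} one has R A^{-1} S^β Ψ_Σ ≠ J_D Ψ_D or Ĵ Â^{-1} D̂^β Ψ_D ≠ J_Σ Ψ_Σ (in H). Then 𝒢 is positive definite on ker 𝒜, i.e. Φᵀ𝒢Φ > 0 for every nonzero Φ with 𝒜Φ = 0. -/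
open Matrix
open scoped RealInnerProductSpace

open Matrix

/-- The constraint matrix `𝒜 = [A 0 0 −S^β; 0 Â −D̂^β 0]` of the discrete
PDE-constrained optimization problem, acting on `(U, Û, Ψ_D, Ψ_Σ)`. -/
noncomputable def constraintMat {N Nh ND NS : ℕ}
    (A : Matrix (Fin N) (Fin N) ℝ) (Ah : Matrix (Fin Nh) (Fin Nh) ℝ)
    (Sb : Matrix (Fin N) (Fin NS) ℝ) (Db : Matrix (Fin Nh) (Fin ND) ℝ) :
    Matrix (Fin N ⊕ Fin Nh) ((Fin N ⊕ Fin Nh) ⊕ (Fin ND ⊕ Fin NS)) ℝ :=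
  Matrix.fromCols (Matrix.fromBlocks A 0 0 Ah) (Matrix.fromBlocks 0 (-Sb) (-Db) 0)

/-- The symmetric matrix `𝒢 = [[G,0,−D,0],[0,Ĝ,0,−Ŝ],[−Dᵀ,0,M^D,0],[0,−Ŝᵀ,0,M^Σ]]`
acting on `(U, Û, Ψ_D, Ψ_Σ)`. -/
noncomputable def gMat {N Nh ND NS : ℕ}
    (G : Matrix (Fin N) (Fin N) ℝ) (Gh : Matrix (Fin Nh) (Fin Nh) ℝ)
    (MD : Matrix (Fin ND) (Fin ND) ℝ) (MS : Matrix (Fin NS) (Fin NS) ℝ)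
    (D : Matrix (Fin N) (Fin ND) ℝ) (Sh : Matrix (Fin Nh) (Fin NS) ℝ) :
    Matrix ((Fin N ⊕ Fin Nh) ⊕ (Fin ND ⊕ Fin NS))
      ((Fin N ⊕ Fin Nh) ⊕ (Fin ND ⊕ Fin NS)) ℝ :=
  Matrix.fromBlocks (Matrix.fromBlocks G 0 0 Gh) (Matrix.fromBlocks (-D) 0 0 (-Sh))
    (Matrix.fromBlocks (-Dᵀ) 0 0 (-Shᵀ)) (Matrix.fromBlocks MD 0 0 MS)


lemma quad_eq_inner {n m : ℕ} {H : Type*} [NormedAddCommGroup H] [InnerProductSpace ℝ H]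
    (L1 : (Fin n → ℝ) →ₗ[ℝ] H) (L2 : (Fin m → ℝ) →ₗ[ℝ] H)
    (M : Matrix (Fin n) (Fin m) ℝ)
    (hM : ∀ k l, M k l = ⟪L1 (Pi.single k 1), L2 (Pi.single l 1)⟫)
    (x : Fin n → ℝ) (y : Fin m → ℝ) : x ⬝ᵥ M.mulVec y = ⟪L1 x, L2 y⟫ := by
  have hx : L1 x = ∑ k, x k • L1 (Pi.single k 1) := by
    conv_lhs => rw [pi_eq_sum_univ x]
    rw [map_sum]
    refine Finset.sum_congr rfl fun k _ => ?_
    rw [L1.map_smul]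
    have h : (fun j => if k = j then (1:ℝ) else 0) = Pi.single k 1 := by
      funext j; simp [Pi.single_apply, eq_comm]
    rw [h]
  have hy : L2 y = ∑ l, y l • L2 (Pi.single l 1) := by
    conv_lhs => rw [pi_eq_sum_univ y]
    rw [map_sum]
    refine Finset.sum_congr rfl fun l _ => ?_
    rw [L2.map_smul]
    have h : (fun j => if l = j then (1:ℝ) else 0) = Pi.single l 1 := by
      funext j; simp [Pi.single_apply, eq_comm]
    rw [h]
  rw [hx, hy, sum_inner]
  simp only [inner_sum, real_inner_smul_left, real_inner_smul_right]
  simp only [dotProduct, mulVec, dotProduct, hM, Finset.mul_sum]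
  refine Finset.sum_congr rfl fun k _ => Finset.sum_congr rfl fun l _ => by ring

/-- If for every nonzero pair `(Ψ_D, Ψ_Σ)` one has
`R A⁻¹ S^β Ψ_Σ ≠ J_D Ψ_D` or `Ĵ Â⁻¹ D̂^β Ψ_D ≠ J_Σ Ψ_Σ`, then `𝒢` is positive
definite on `ker 𝒜`. -/
theorem gMat_posdef_on_ker
    (N Nh ND NS : ℕ) (hN : 0 < N) (hNh : 0 < Nh) (hND : 0 < ND) (hNS : 0 < NS)
    (A : Matrix (Fin N) (Fin N) ℝ) (hA : IsUnit A.det)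
    (Ah : Matrix (Fin Nh) (Fin Nh) ℝ) (hAh : IsUnit Ah.det)
    (Sb : Matrix (Fin N) (Fin NS) ℝ) (Db : Matrix (Fin Nh) (Fin ND) ℝ)
    (H : Type*) [NormedAddCommGroup H] [InnerProductSpace ℝ H]
    (R : (Fin N → ℝ) →ₗ[ℝ] H) (Jh : (Fin Nh → ℝ) →ₗ[ℝ] H)
    (JD : (Fin ND → ℝ) →ₗ[ℝ] H) (JS : (Fin NS → ℝ) →ₗ[ℝ] H)
    (G : Matrix (Fin N) (Fin N) ℝ)
    (hG : ∀ k l, G k l = ⟪R (Pi.single k 1), R (Pi.single l 1)⟫)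
    (Gh : Matrix (Fin Nh) (Fin Nh) ℝ)
    (hGh : ∀ k l, Gh k l = ⟪Jh (Pi.single k 1), Jh (Pi.single l 1)⟫)
    (MD : Matrix (Fin ND) (Fin ND) ℝ)
    (hMD : ∀ k l, MD k l = ⟪JD (Pi.single k 1), JD (Pi.single l 1)⟫)
    (MS : Matrix (Fin NS) (Fin NS) ℝ)
    (hMS : ∀ k l, MS k l = ⟪JS (Pi.single k 1), JS (Pi.single l 1)⟫)
    (D : Matrix (Fin N) (Fin ND) ℝ)
    (hD : ∀ k l, D k l = ⟪R (Pi.single k 1), JD (Pi.single l 1)⟫)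
    (Sh : Matrix (Fin Nh) (Fin NS) ℝ)
    (hSh : ∀ k l, Sh k l = ⟪Jh (Pi.single k 1), JS (Pi.single l 1)⟫)
    (hne : ∀ (PD : Fin ND → ℝ) (PS : Fin NS → ℝ), (PD, PS) ≠ 0 →
      R (A⁻¹.mulVec (Sb.mulVec PS)) ≠ JD PD ∨
        Jh (Ah⁻¹.mulVec (Db.mulVec PD)) ≠ JS PS) :
    ∀ Φ : ((Fin N ⊕ Fin Nh) ⊕ (Fin ND ⊕ Fin NS)) → ℝ, Φ ≠ 0 →
      (constraintMat A Ah Sb Db).mulVec Φ = 0 →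
        0 < Φ ⬝ᵥ (gMat G Gh MD MS D Sh).mulVec Φ := by
  intro Phi hPhi hker
  set U : Fin N → ℝ := fun i => Phi (Sum.inl (Sum.inl i)) with hU
  set Uh : Fin Nh → ℝ := fun i => Phi (Sum.inl (Sum.inr i)) with hUh
  set PD : Fin ND → ℝ := fun i => Phi (Sum.inr (Sum.inl i)) with hPD
  set PS : Fin NS → ℝ := fun i => Phi (Sum.inr (Sum.inr i)) with hPS
  have hPhieq : Phi = Sum.elim (Sum.elim U Uh) (Sum.elim PD PS) := by
    funext x; rcases x with (i | i) | (i | i) <;> rfl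
  -- decode the constraint
  rw [hPhieq] at hker
  rw [constraintMat, fromCols_mulVec_sumElim, fromBlocks_mulVec, fromBlocks_mulVec] at hker
  simp only [Matrix.zero_mulVec, add_zero, zero_add, Matrix.neg_mulVec] at hker
  have hker1 : A.mulVec U = Sb.mulVec PS := by
    have := congrFun hker
    have h1 : ∀ i, A.mulVec U i + (-(Sb.mulVec PS)) i = 0 := fun i => this (Sum.inl i)
    funext i; have := h1 i; simp at this; linarith
  have hker2 : Ah.mulVec Uh = Db.mulVec PD := by
    have := congrFun hker
    have h1 : ∀ i, Ah.mulVec Uh i + (-(Db.mulVec PD)) i = 0 := fun i => this (Sum.inr i)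
    funext i; have := h1 i; simp at this; linarith
  have hUeq : U = A⁻¹.mulVec (Sb.mulVec PS) := by
    rw [← hker1, Matrix.mulVec_mulVec, Matrix.nonsing_inv_mul A hA, Matrix.one_mulVec]
  have hUheq : Uh = Ah⁻¹.mulVec (Db.mulVec PD) := by
    rw [← hker2, Matrix.mulVec_mulVec, Matrix.nonsing_inv_mul Ah hAh, Matrix.one_mulVec]
  -- compute the quadratic form
  have elim_add : ∀ {p q : ℕ} (a c : Fin p → ℝ) (b d : Fin q → ℝ),
      Sum.elim a b + Sum.elim c d = Sum.elim (a + c) (b + d) := by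
    intro p q a c b d; funext x; rcases x with x | x <;> rfl
  have hform : Phi ⬝ᵥ (gMat G Gh MD MS D Sh).mulVec Phi
      = ⟪R U - JD PD, R U - JD PD⟫ + ⟪Jh Uh - JS PS, Jh Uh - JS PS⟫ := by
    rw [hPhieq, gMat, fromBlocks_mulVec]
    simp only [Sum.elim_comp_inl, Sum.elim_comp_inr]
    rw [fromBlocks_mulVec, fromBlocks_mulVec, fromBlocks_mulVec, fromBlocks_mulVec]
    simp only [Matrix.zero_mulVec, add_zero, zero_add, Matrix.neg_mulVec]
    rw [elim_add, elim_add, sumElim_dotProduct_sumElim, sumElim_dotProduct_sumElim,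
      sumElim_dotProduct_sumElim]
    simp only [Sum.elim_comp_inl, Sum.elim_comp_inr]
    have e1 : U ⬝ᵥ (G.mulVec U + -(D.mulVec PD)) = ⟪R U, R U⟫ - ⟪R U, JD PD⟫ := by
      rw [dotProduct_add, dotProduct_neg, quad_eq_inner R R G hG, quad_eq_inner R JD D hD]
      ring
    have e2 : Uh ⬝ᵥ (Gh.mulVec Uh + -(Sh.mulVec PS)) = ⟪Jh Uh, Jh Uh⟫ - ⟪Jh Uh, JS PS⟫ := by
      rw [dotProduct_add, dotProduct_neg, quad_eq_inner Jh Jh Gh hGh, quad_eq_inner Jh JS Sh hSh]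
      ring
    have eDT : PD ⬝ᵥ Dᵀ.mulVec U = ⟪R U, JD PD⟫ := by
      rw [quad_eq_inner JD R Dᵀ
        (fun k l => by rw [Matrix.transpose_apply, hD l k]; exact real_inner_comm _ _)]
      exact real_inner_comm _ _
    have e3 : PD ⬝ᵥ (-(Dᵀ.mulVec U) + MD.mulVec PD) = ⟪JD PD, JD PD⟫ - ⟪R U, JD PD⟫ := by
      rw [dotProduct_add, dotProduct_neg, eDT, quad_eq_inner JD JD MD hMD]
      ring
    have eST : PS ⬝ᵥ Shᵀ.mulVec Uh = ⟪Jh Uh, JS PS⟫ := by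
      rw [quad_eq_inner JS Jh Shᵀ
        (fun k l => by rw [Matrix.transpose_apply, hSh l k]; exact real_inner_comm _ _)]
      exact real_inner_comm _ _
    have e4 : PS ⬝ᵥ (-(Shᵀ.mulVec Uh) + MS.mulVec PS) = ⟪JS PS, JS PS⟫ - ⟪Jh Uh, JS PS⟫ := by
      rw [dotProduct_add, dotProduct_neg, eST, quad_eq_inner JS JS MS hMS]
      ring
    rw [e1, e2, e3, e4, inner_sub_sub_self, inner_sub_sub_self, real_inner_comm (R U) (JD PD),
      real_inner_comm (Jh Uh) (JS PS)]
    ring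
  rw [hform]
  -- case split
  by_cases hzero : (PD, PS) = 0
  · exfalso
    apply hPhi
    have hPD0 : PD = 0 := congrArg Prod.fst hzero
    have hPS0 : PS = 0 := congrArg Prod.snd hzero
    have hU0 : U = 0 := by rw [hUeq, hPS0]; simp
    have hUh0 : Uh = 0 := by rw [hUheq, hPD0]; simp
    rw [hPhieq, hU0, hUh0, hPD0, hPS0]
    funext x; rcases x with (i | i) | (i | i) <;> rfl
  · rcases hne PD PS hzero with h | h
    · have h1 : R U - JD PD ≠ 0 := by
        rw [hUeq]; intro hc; exact h (sub_eq_zero.mp hc)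
      have p1 : 0 < ⟪R U - JD PD, R U - JD PD⟫ := lt_of_le_of_ne real_inner_self_nonneg (fun hc => (inner_self_ne_zero.mpr h1) hc.symm)
      have p2 : 0 ≤ ⟪Jh Uh - JS PS, Jh Uh - JS PS⟫ := real_inner_self_nonneg
      linarith
    · have h1 : Jh Uh - JS PS ≠ 0 := by
        rw [hUheq]; intro hc; exact h (sub_eq_zero.mp hc)
      have p1 : 0 < ⟪Jh Uh - JS PS, Jh Uh - JS PS⟫ := lt_of_le_of_ne real_inner_self_nonneg (fun hc => (inner_self_ne_zero.mpr h1) hc.symm)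
      have p2 : 0 ≤ ⟪R U - JD PD, R U - JD PD⟫ := real_inner_self_nonneg
      linarith
end

section
/- Assume that for every nonzero pair (Ψ_D, Ψ_Σ) ∈ ℝ^{N_D} × ℝ^{N_Σ} one has R A^{-1} S^β Ψ_Σ ≠ J_D Ψ_D or Ĵ Â^{-1} D̂^β Ψ_D ≠ J_Σ Ψ_Σ (in H). Then the saddle-point (KKT) block matrix 𝒦 = [[𝒢, 𝒜ᵀ], [𝒜, 0]] is nonsingular; consequently, for every right-hand side the KKT system has a unique solution. -/
open Matrix
open scoped RealInnerProductSpace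

open Matrix

lemma gram_dot {n m : ℕ} {H : Type*} [NormedAddCommGroup H] [InnerProductSpace ℝ H]
    (R : (Fin n → ℝ) →ₗ[ℝ] H) (J : (Fin m → ℝ) →ₗ[ℝ] H)
    (M : Matrix (Fin n) (Fin m) ℝ)
    (hM : ∀ k l, M k l = ⟪R (Pi.single k 1), J (Pi.single l 1)⟫)
    (u : Fin n → ℝ) (v : Fin m → ℝ) :
    u ⬝ᵥ M.mulVec v = ⟪R u, J v⟫ := by
  have hu : R u = ∑ k, u k • R (Pi.single k 1) := by
    conv_lhs => rw [← Finset.univ_sum_single u]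
    rw [map_sum]
    refine Finset.sum_congr rfl fun k _ => ?_
    rw [← _root_.map_smul]
    congr 1
    rw [← Pi.single_smul, smul_eq_mul, mul_one]
  have hv : J v = ∑ l, v l • J (Pi.single l 1) := by
    conv_lhs => rw [← Finset.univ_sum_single v]
    rw [map_sum]
    refine Finset.sum_congr rfl fun k _ => ?_
    rw [← _root_.map_smul]
    congr 1
    rw [← Pi.single_smul, smul_eq_mul, mul_one]
  calc u ⬝ᵥ M.mulVec v = ∑ k, ∑ l, u k * (M k l * v l) := by
        simp [dotProduct, Matrix.mulVec, Finset.mul_sum]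
    _ = ⟪R u, J v⟫ := by
        rw [hu, hv, sum_inner]
        refine Finset.sum_congr rfl fun k _ => ?_
        rw [inner_sum]
        refine Finset.sum_congr rfl fun l _ => ?_
        rw [real_inner_smul_left, real_inner_smul_right, hM]
        ring

/-- Under the non-degeneracy assumption, the saddle-point (KKT) block
matrix `𝒦 = [[𝒢, 𝒜ᵀ], [𝒜, 0]]` is nonsingular; consequently, every KKT system has a
unique solution. -/
theorem kkt_block_matrix_nonsingular
    (N Nh ND NS : ℕ) (hN : 0 < N) (hNh : 0 < Nh) (hND : 0 < ND) (hNS : 0 < NS)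
    (A : Matrix (Fin N) (Fin N) ℝ) (hA : IsUnit A.det)
    (Ah : Matrix (Fin Nh) (Fin Nh) ℝ) (hAh : IsUnit Ah.det)
    (Sb : Matrix (Fin N) (Fin NS) ℝ) (Db : Matrix (Fin Nh) (Fin ND) ℝ)
    (H : Type*) [NormedAddCommGroup H] [InnerProductSpace ℝ H]
    (R : (Fin N → ℝ) →ₗ[ℝ] H) (Jh : (Fin Nh → ℝ) →ₗ[ℝ] H)
    (JD : (Fin ND → ℝ) →ₗ[ℝ] H) (JS : (Fin NS → ℝ) →ₗ[ℝ] H)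
    (G : Matrix (Fin N) (Fin N) ℝ)
    (hG : ∀ k l, G k l = ⟪R (Pi.single k 1), R (Pi.single l 1)⟫)
    (Gh : Matrix (Fin Nh) (Fin Nh) ℝ)
    (hGh : ∀ k l, Gh k l = ⟪Jh (Pi.single k 1), Jh (Pi.single l 1)⟫)
    (MD : Matrix (Fin ND) (Fin ND) ℝ)
    (hMD : ∀ k l, MD k l = ⟪JD (Pi.single k 1), JD (Pi.single l 1)⟫)
    (MS : Matrix (Fin NS) (Fin NS) ℝ)
    (hMS : ∀ k l, MS k l = ⟪JS (Pi.single k 1), JS (Pi.single l 1)⟫)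
    (D : Matrix (Fin N) (Fin ND) ℝ)
    (hD : ∀ k l, D k l = ⟪R (Pi.single k 1), JD (Pi.single l 1)⟫)
    (Sh : Matrix (Fin Nh) (Fin NS) ℝ)
    (hSh : ∀ k l, Sh k l = ⟪Jh (Pi.single k 1), JS (Pi.single l 1)⟫)
    (hne : ∀ (PD : Fin ND → ℝ) (PS : Fin NS → ℝ), (PD, PS) ≠ 0 →
      R (A⁻¹.mulVec (Sb.mulVec PS)) ≠ JD PD ∨
        Jh (Ah⁻¹.mulVec (Db.mulVec PD)) ≠ JS PS) :
    (Matrix.fromBlocks (gMat G Gh MD MS D Sh) (constraintMat A Ah Sb Db)ᵀ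
        (constraintMat A Ah Sb Db) 0).det ≠ 0 ∧
    ∀ b : ((Fin N ⊕ Fin Nh) ⊕ (Fin ND ⊕ Fin NS)) ⊕ (Fin N ⊕ Fin Nh) → ℝ,
      ∃! z, (Matrix.fromBlocks (gMat G Gh MD MS D Sh) (constraintMat A Ah Sb Db)ᵀ
        (constraintMat A Ah Sb Db) 0).mulVec z = b := by
  
  classical
  set K := Matrix.fromBlocks (gMat G Gh MD MS D Sh) (constraintMat A Ah Sb Db)ᵀ
      (constraintMat A Ah Sb Db) 0 with hK
  have hker : ∀ z, K.mulVec z = 0 → z = 0 := by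
    intro z hz
    set x1 : Fin N → ℝ := fun i => z (Sum.inl (Sum.inl (Sum.inl i))) with hx1
    set x2 : Fin Nh → ℝ := fun i => z (Sum.inl (Sum.inl (Sum.inr i))) with hx2
    set p1 : Fin ND → ℝ := fun i => z (Sum.inl (Sum.inr (Sum.inl i))) with hp1
    set p2 : Fin NS → ℝ := fun i => z (Sum.inl (Sum.inr (Sum.inr i))) with hp2
    set l1 : Fin N → ℝ := fun i => z (Sum.inr (Sum.inl i)) with hl1
    set l2 : Fin Nh → ℝ := fun i => z (Sum.inr (Sum.inr i)) with hl2
    have hz' : z = Sum.elim (Sum.elim (Sum.elim x1 x2) (Sum.elim p1 p2)) (Sum.elim l1 l2) := by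
      funext i; rcases i with ((i|i)|(i|i))|(i|i) <;> rfl
    rw [hz', hK] at hz
    simp only [gMat, constraintMat] at hz
    have E1 : G *ᵥ x1 - D *ᵥ p1 + Aᵀ *ᵥ l1 = 0 := by
      funext i
      have h := congrFun hz (Sum.inl (Sum.inl (Sum.inl i)))
      simp [Matrix.fromBlocks_mulVec, Matrix.transpose_fromCols, Matrix.fromBlocks_transpose,
        Matrix.fromRows_mulVec, Matrix.fromCols_mulVec_sumElim, Matrix.zero_mulVec,
        Matrix.neg_mulVec, Matrix.transpose_neg, Matrix.transpose_zero] at h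
      simp [sub_eq_add_neg]; linarith [h]
    have E2 : Gh *ᵥ x2 - Sh *ᵥ p2 + Ahᵀ *ᵥ l2 = 0 := by
      funext i
      have h := congrFun hz (Sum.inl (Sum.inl (Sum.inr i)))
      simp [Matrix.fromBlocks_mulVec, Matrix.transpose_fromCols, Matrix.fromBlocks_transpose,
        Matrix.fromRows_mulVec, Matrix.fromCols_mulVec_sumElim, Matrix.zero_mulVec,
        Matrix.neg_mulVec, Matrix.transpose_neg, Matrix.transpose_zero] at h
      simp [sub_eq_add_neg]; linarith [h]
    have E3 : -(Dᵀ *ᵥ x1) + MD *ᵥ p1 - Dbᵀ *ᵥ l2 = 0 := by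
      funext i
      have h := congrFun hz (Sum.inl (Sum.inr (Sum.inl i)))
      simp [Matrix.fromBlocks_mulVec, Matrix.transpose_fromCols, Matrix.fromBlocks_transpose,
        Matrix.fromRows_mulVec, Matrix.fromCols_mulVec_sumElim, Matrix.zero_mulVec,
        Matrix.neg_mulVec, Matrix.transpose_neg, Matrix.transpose_zero] at h
      simp [sub_eq_add_neg]; linarith [h]
    have E4 : -(Shᵀ *ᵥ x2) + MS *ᵥ p2 - Sbᵀ *ᵥ l1 = 0 := by
      funext i
      have h := congrFun hz (Sum.inl (Sum.inr (Sum.inr i)))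
      simp [Matrix.fromBlocks_mulVec, Matrix.transpose_fromCols, Matrix.fromBlocks_transpose,
        Matrix.fromRows_mulVec, Matrix.fromCols_mulVec_sumElim, Matrix.zero_mulVec,
        Matrix.neg_mulVec, Matrix.transpose_neg, Matrix.transpose_zero] at h
      simp [sub_eq_add_neg]; linarith [h]
    have E5 : A *ᵥ x1 = Sb *ᵥ p2 := by
      funext i
      have h := congrFun hz (Sum.inr (Sum.inl i))
      simp [Matrix.fromBlocks_mulVec, Matrix.transpose_fromCols, Matrix.fromBlocks_transpose,
        Matrix.fromRows_mulVec, Matrix.fromCols_mulVec_sumElim, Matrix.zero_mulVec,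
        Matrix.neg_mulVec, Matrix.transpose_neg, Matrix.transpose_zero] at h
      linarith [h]
    have E6 : Ah *ᵥ x2 = Db *ᵥ p1 := by
      funext i
      have h := congrFun hz (Sum.inr (Sum.inr i))
      simp [Matrix.fromBlocks_mulVec, Matrix.transpose_fromCols, Matrix.fromBlocks_transpose,
        Matrix.fromRows_mulVec, Matrix.fromCols_mulVec_sumElim, Matrix.zero_mulVec,
        Matrix.neg_mulVec, Matrix.transpose_neg, Matrix.transpose_zero] at h
      linarith [h]
    -- quadratic form
    have c1 := congrArg (fun w => x1 ⬝ᵥ w) E1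
    have c2 := congrArg (fun w => x2 ⬝ᵥ w) E2
    have c3 := congrArg (fun w => p1 ⬝ᵥ w) E3
    have c4 := congrArg (fun w => p2 ⬝ᵥ w) E4
    simp only [dotProduct_add, dotProduct_sub, dotProduct_neg,
      dotProduct_zero] at c1 c2 c3 c4
    have t1 : x1 ⬝ᵥ (Aᵀ *ᵥ l1) = (A *ᵥ x1) ⬝ᵥ l1 := by
      rw [Matrix.dotProduct_mulVec, Matrix.vecMul_transpose]
    have t2 : x2 ⬝ᵥ (Ahᵀ *ᵥ l2) = (Ah *ᵥ x2) ⬝ᵥ l2 := by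
      rw [Matrix.dotProduct_mulVec, Matrix.vecMul_transpose]
    have t3 : p1 ⬝ᵥ (Dbᵀ *ᵥ l2) = (Db *ᵥ p1) ⬝ᵥ l2 := by
      rw [Matrix.dotProduct_mulVec, Matrix.vecMul_transpose]
    have t4 : p2 ⬝ᵥ (Sbᵀ *ᵥ l1) = (Sb *ᵥ p2) ⬝ᵥ l1 := by
      rw [Matrix.dotProduct_mulVec, Matrix.vecMul_transpose]
    have c5 := congrArg (fun w => w ⬝ᵥ l1) E5
    have c6 := congrArg (fun w => w ⬝ᵥ l2) E6
    have g11 : x1 ⬝ᵥ G *ᵥ x1 = ⟪R x1, R x1⟫ := gram_dot R R G hG x1 x1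
    have g12 : x1 ⬝ᵥ D *ᵥ p1 = ⟪R x1, JD p1⟫ := gram_dot R JD D hD x1 p1
    have g21 : p1 ⬝ᵥ Dᵀ *ᵥ x1 = ⟪JD p1, R x1⟫ := by
      refine gram_dot JD R Dᵀ (fun k l => ?_) p1 x1
      rw [Matrix.transpose_apply, hD, real_inner_comm]
    have g22 : p1 ⬝ᵥ MD *ᵥ p1 = ⟪JD p1, JD p1⟫ := gram_dot JD JD MD hMD p1 p1
    have h11 : x2 ⬝ᵥ Gh *ᵥ x2 = ⟪Jh x2, Jh x2⟫ := gram_dot Jh Jh Gh hGh x2 x2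
    have h12 : x2 ⬝ᵥ Sh *ᵥ p2 = ⟪Jh x2, JS p2⟫ := gram_dot Jh JS Sh hSh x2 p2
    have h21 : p2 ⬝ᵥ Shᵀ *ᵥ x2 = ⟪JS p2, Jh x2⟫ := by
      refine gram_dot JS Jh Shᵀ (fun k l => ?_) p2 x2
      rw [Matrix.transpose_apply, hSh, real_inner_comm]
    have h22 : p2 ⬝ᵥ MS *ᵥ p2 = ⟪JS p2, JS p2⟫ := gram_dot JS JS MS hMS p2 p2
    have key : ⟪R x1 - JD p1, R x1 - JD p1⟫ + ⟪Jh x2 - JS p2, Jh x2 - JS p2⟫ = 0 := by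
      rw [inner_sub_sub_self, inner_sub_sub_self]
      rw [← g11, ← g22, ← h11, ← h22, ← g21, ← h21]
      rw [t1] at c1; rw [t2] at c2; rw [t3] at c3; rw [t4] at c4
      have g21' : p1 ⬝ᵥ Dᵀ *ᵥ x1 = x1 ⬝ᵥ D *ᵥ p1 := by rw [g21, real_inner_comm, ← g12]
      have h21' : p2 ⬝ᵥ Shᵀ *ᵥ x2 = x2 ⬝ᵥ Sh *ᵥ p2 := by rw [h21, real_inner_comm, ← h12]
      linarith [c1, c2, c3, c4, c5, c6, g21', h21']
    have nn1 : (0:ℝ) ≤ ⟪R x1 - JD p1, R x1 - JD p1⟫ := real_inner_self_nonneg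
    have nn2 : (0:ℝ) ≤ ⟪Jh x2 - JS p2, Jh x2 - JS p2⟫ := real_inner_self_nonneg
    have z1 : R x1 - JD p1 = 0 := by
      have : ⟪R x1 - JD p1, R x1 - JD p1⟫ = (0:ℝ) := by linarith
      exact inner_self_eq_zero.mp this
    have z2 : Jh x2 - JS p2 = 0 := by
      have : ⟪Jh x2 - JS p2, Jh x2 - JS p2⟫ = (0:ℝ) := by linarith
      exact inner_self_eq_zero.mp this
    have hx1e : x1 = A⁻¹ *ᵥ (Sb *ᵥ p2) := by
      rw [← E5, Matrix.mulVec_mulVec, Matrix.nonsing_inv_mul A hA, Matrix.one_mulVec]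
    have hx2e : x2 = Ah⁻¹ *ᵥ (Db *ᵥ p1) := by
      rw [← E6, Matrix.mulVec_mulVec, Matrix.nonsing_inv_mul Ah hAh, Matrix.one_mulVec]
    have hp0 : (p1, p2) = (0 : (Fin ND → ℝ) × (Fin NS → ℝ)) := by
      by_contra hcon
      rcases hne p1 p2 hcon with h' | h'
      · exact h' (by rw [← hx1e]; exact sub_eq_zero.mp z1)
      · exact h' (by rw [← hx2e]; exact sub_eq_zero.mp z2)
    have hp1z : p1 = 0 := congrArg Prod.fst hp0
    have hp2z : p2 = 0 := congrArg Prod.snd hp0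
    have hx1z : x1 = 0 := by rw [hx1e, hp2z, Matrix.mulVec_zero, Matrix.mulVec_zero]
    have hx2z : x2 = 0 := by rw [hx2e, hp1z, Matrix.mulVec_zero, Matrix.mulVec_zero]
    have hl1z : l1 = 0 := by
      have h : Aᵀ *ᵥ l1 = 0 := by
        have := E1
        rw [hx1z, hp1z, Matrix.mulVec_zero, Matrix.mulVec_zero, sub_zero, zero_add] at this
        exact this
      have hAt : IsUnit Aᵀ.det := by rwa [Matrix.det_transpose]
      calc l1 = (Aᵀ)⁻¹ *ᵥ (Aᵀ *ᵥ l1) := by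
              rw [Matrix.mulVec_mulVec, Matrix.nonsing_inv_mul _ hAt, Matrix.one_mulVec]
        _ = 0 := by rw [h, Matrix.mulVec_zero]
    have hl2z : l2 = 0 := by
      have h : Ahᵀ *ᵥ l2 = 0 := by
        have := E2
        rw [hx2z, hp2z, Matrix.mulVec_zero, Matrix.mulVec_zero, sub_zero, zero_add] at this
        exact this
      have hAt : IsUnit Ahᵀ.det := by rwa [Matrix.det_transpose]
      calc l2 = (Ahᵀ)⁻¹ *ᵥ (Ahᵀ *ᵥ l2) := by
              rw [Matrix.mulVec_mulVec, Matrix.nonsing_inv_mul _ hAt, Matrix.one_mulVec]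
        _ = 0 := by rw [h, Matrix.mulVec_zero]
    rw [hz']
    funext i
    rcases i with ((i|i)|(i|i))|(i|i) <;>
      simp [hx1z, hx2z, hp1z, hp2z, hl1z, hl2z]
  have hdet : K.det ≠ 0 := by
    intro h
    obtain ⟨v, hv0, hv⟩ := Matrix.exists_mulVec_eq_zero_iff.mpr h
    exact hv0 (hker v hv)
  refine ⟨hdet, fun b => ?_⟩
  have hdet' : IsUnit K.det := isUnit_iff_ne_zero.mpr hdet
  refine ⟨K⁻¹ *ᵥ b, ?_, ?_⟩
  · show K *ᵥ (K⁻¹ *ᵥ b) = b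
    rw [Matrix.mulVec_mulVec, Matrix.mul_nonsing_inv _ hdet', Matrix.one_mulVec]
  · intro y hy
    have hy' : K *ᵥ y = b := hy
    have h0 : K *ᵥ (y - K⁻¹ *ᵥ b) = 0 := by
      rw [Matrix.mulVec_sub, hy', Matrix.mulVec_mulVec, Matrix.mul_nonsing_inv _ hdet',
        Matrix.one_mulVec, sub_self]
    exact sub_eq_zero.mp (hker _ h0)
end

section
/- The reduced matrix ℳ is symmetric and positive semidefinite. If moreover for every nonzero pair (Ψ_D, Ψ_Σ) ∈ ℝ^{N_D} × ℝ^{N_Σ} one has R A^{-1} S^β Ψ_Σ ≠ J_D Ψ_D or Ĵ Â^{-1} D̂^β Ψ_D ≠ J_Σ Ψ_Σ (in H), then ℳ is positive definite. -/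
open Matrix
open scoped RealInnerProductSpace

section helpers

variable {H : Type*} [NormedAddCommGroup H] [InnerProductSpace ℝ H]

lemma dot_gram {n m : ℕ} {M : Matrix (Fin n) (Fin m) ℝ}
    (T : (Fin n → ℝ) →ₗ[ℝ] H) (S : (Fin m → ℝ) →ₗ[ℝ] H)
    (hM : ∀ k l, M k l = ⟪T (Pi.single k 1), S (Pi.single l 1)⟫)
    (x : Fin n → ℝ) (y : Fin m → ℝ) :
    x ⬝ᵥ M.mulVec y = ⟪T x, S y⟫ := by
  have hx : T x = ∑ k, x k • T (Pi.single k 1) := by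
    conv_lhs => rw [← Finset.univ_sum_single x]
    rw [map_sum]
    refine Finset.sum_congr rfl fun k _ => ?_
    have h1 : Pi.single k (x k) = x k • (Pi.single k 1 : Fin n → ℝ) := by
      ext j; by_cases h : k = j <;> simp [Pi.single_apply, h]
    rw [h1, _root_.map_smul]
  have hy : S y = ∑ l, y l • S (Pi.single l 1) := by
    conv_lhs => rw [← Finset.univ_sum_single y]
    rw [map_sum]
    refine Finset.sum_congr rfl fun l _ => ?_
    have h1 : Pi.single l (y l) = y l • (Pi.single l 1 : Fin m → ℝ) := by
      ext j; by_cases h : l = j <;> simp [Pi.single_apply, h]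
    rw [h1, _root_.map_smul]
  rw [hx, hy, sum_inner]
  simp only [inner_sum, real_inner_smul_left, real_inner_smul_right]
  simp only [dotProduct, mulVec, dotProduct, hM, Finset.mul_sum]
  exact Finset.sum_congr rfl fun k _ => Finset.sum_congr rfl fun l _ => by ring

lemma dot_transpose_mulVec {n m : ℕ} (M : Matrix (Fin n) (Fin m) ℝ)
    (v : Fin m → ℝ) (w : Fin n → ℝ) :
    v ⬝ᵥ Mᵀ.mulVec w = M.mulVec v ⬝ᵥ w := by
  rw [Matrix.dotProduct_mulVec, Matrix.vecMul_transpose, dotProduct_comm,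
    Matrix.dotProduct_mulVec, dotProduct_comm]

end helpers

/-- The reduced matrix `ℳ` on `ℝ^{N_D} × ℝ^{N_Σ}`. -/
noncomputable def redMat {N Nh ND NS : ℕ}
    (A : Matrix (Fin N) (Fin N) ℝ) (Ah : Matrix (Fin Nh) (Fin Nh) ℝ)
    (Sb : Matrix (Fin N) (Fin NS) ℝ) (Db : Matrix (Fin Nh) (Fin ND) ℝ)
    (G : Matrix (Fin N) (Fin N) ℝ) (Gh : Matrix (Fin Nh) (Fin Nh) ℝ)
    (MD : Matrix (Fin ND) (Fin ND) ℝ) (MS : Matrix (Fin NS) (Fin NS) ℝ)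
    (D : Matrix (Fin N) (Fin ND) ℝ) (Sh : Matrix (Fin Nh) (Fin NS) ℝ) :
    Matrix (Fin ND ⊕ Fin NS) (Fin ND ⊕ Fin NS) ℝ :=
  Matrix.fromBlocks
    (Dbᵀ * (Ah⁻¹)ᵀ * Gh * Ah⁻¹ * Db + MD)
    (-(Dᵀ * A⁻¹ * Sb) - Dbᵀ * (Ah⁻¹)ᵀ * Sh)
    (-(Sbᵀ * (A⁻¹)ᵀ * D) - Shᵀ * Ah⁻¹ * Db)
    (Sbᵀ * (A⁻¹)ᵀ * G * A⁻¹ * Sb + MS)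

/-- The reduced matrix `ℳ` is symmetric positive semidefinite, and it is
positive definite under the non-degeneracy assumption. -/
theorem redMat_symm_posSemidef_posDef
    (N Nh ND NS : ℕ) (hN : 0 < N) (hNh : 0 < Nh) (hND : 0 < ND) (hNS : 0 < NS)
    (A : Matrix (Fin N) (Fin N) ℝ) (hA : IsUnit A.det)
    (Ah : Matrix (Fin Nh) (Fin Nh) ℝ) (hAh : IsUnit Ah.det)
    (Sb : Matrix (Fin N) (Fin NS) ℝ) (Db : Matrix (Fin Nh) (Fin ND) ℝ)
    (H : Type*) [NormedAddCommGroup H] [InnerProductSpace ℝ H]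
    (R : (Fin N → ℝ) →ₗ[ℝ] H) (Jh : (Fin Nh → ℝ) →ₗ[ℝ] H)
    (JD : (Fin ND → ℝ) →ₗ[ℝ] H) (JS : (Fin NS → ℝ) →ₗ[ℝ] H)
    (G : Matrix (Fin N) (Fin N) ℝ)
    (hG : ∀ k l, G k l = ⟪R (Pi.single k 1), R (Pi.single l 1)⟫)
    (Gh : Matrix (Fin Nh) (Fin Nh) ℝ)
    (hGh : ∀ k l, Gh k l = ⟪Jh (Pi.single k 1), Jh (Pi.single l 1)⟫)
    (MD : Matrix (Fin ND) (Fin ND) ℝ)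
    (hMD : ∀ k l, MD k l = ⟪JD (Pi.single k 1), JD (Pi.single l 1)⟫)
    (MS : Matrix (Fin NS) (Fin NS) ℝ)
    (hMS : ∀ k l, MS k l = ⟪JS (Pi.single k 1), JS (Pi.single l 1)⟫)
    (D : Matrix (Fin N) (Fin ND) ℝ)
    (hD : ∀ k l, D k l = ⟪R (Pi.single k 1), JD (Pi.single l 1)⟫)
    (Sh : Matrix (Fin Nh) (Fin NS) ℝ)
    (hSh : ∀ k l, Sh k l = ⟪Jh (Pi.single k 1), JS (Pi.single l 1)⟫)
    :
    (redMat A Ah Sb Db G Gh MD MS D Sh).IsSymm ∧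
    (redMat A Ah Sb Db G Gh MD MS D Sh).PosSemidef ∧
    ((∀ (PD : Fin ND → ℝ) (PS : Fin NS → ℝ), (PD, PS) ≠ 0 →
        R (A⁻¹.mulVec (Sb.mulVec PS)) ≠ JD PD ∨
          Jh (Ah⁻¹.mulVec (Db.mulVec PD)) ≠ JS PS) →
      (redMat A Ah Sb Db G Gh MD MS D Sh).PosDef) := by
  -- symmetry of the Gram matrices
  have hGs : Gᵀ = G := by ext k l; simp [Matrix.transpose_apply, hG, real_inner_comm]
  have hGhs : Ghᵀ = Gh := by ext k l; simp [Matrix.transpose_apply, hGh, real_inner_comm]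
  have hMDs : MDᵀ = MD := by ext k l; simp [Matrix.transpose_apply, hMD, real_inner_comm]
  have hMSs : MSᵀ = MS := by ext k l; simp [Matrix.transpose_apply, hMS, real_inner_comm]
  have hsymm : (redMat A Ah Sb Db G Gh MD MS D Sh).IsSymm := by
    show _ᵀ = _
    rw [redMat, Matrix.fromBlocks_transpose]
    have b11 : (Dbᵀ * (Ah⁻¹)ᵀ * Gh * Ah⁻¹ * Db + MD)ᵀ
        = Dbᵀ * (Ah⁻¹)ᵀ * Gh * Ah⁻¹ * Db + MD := by
      simp only [Matrix.transpose_add, Matrix.transpose_mul, Matrix.transpose_transpose,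
        hGhs, hMDs, Matrix.mul_assoc]
    have b22 : (Sbᵀ * (A⁻¹)ᵀ * G * A⁻¹ * Sb + MS)ᵀ
        = Sbᵀ * (A⁻¹)ᵀ * G * A⁻¹ * Sb + MS := by
      simp only [Matrix.transpose_add, Matrix.transpose_mul, Matrix.transpose_transpose,
        hGs, hMSs, Matrix.mul_assoc]
    have b12 : (-(Dᵀ * A⁻¹ * Sb) - Dbᵀ * (Ah⁻¹)ᵀ * Sh)ᵀ
        = -(Sbᵀ * (A⁻¹)ᵀ * D) - Shᵀ * Ah⁻¹ * Db := by
      simp only [Matrix.transpose_sub, Matrix.transpose_neg, Matrix.transpose_mul,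
        Matrix.transpose_transpose, Matrix.mul_assoc]
    have b21 : (-(Sbᵀ * (A⁻¹)ᵀ * D) - Shᵀ * Ah⁻¹ * Db)ᵀ
        = -(Dᵀ * A⁻¹ * Sb) - Dbᵀ * (Ah⁻¹)ᵀ * Sh := by
      simp only [Matrix.transpose_sub, Matrix.transpose_neg, Matrix.transpose_mul,
        Matrix.transpose_transpose, Matrix.mul_assoc]
    rw [b11, b22, b12, b21]
  have herm : (redMat A Ah Sb Db G Gh MD MS D Sh).IsHermitian := by
    rw [Matrix.IsHermitian, Matrix.conjTranspose_eq_transpose_of_trivial]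
    exact hsymm
  -- the quadratic form
  have key : ∀ (PD : Fin ND → ℝ) (PS : Fin NS → ℝ),
      Sum.elim PD PS ⬝ᵥ (redMat A Ah Sb Db G Gh MD MS D Sh).mulVec (Sum.elim PD PS)
        = ‖R (A⁻¹.mulVec (Sb.mulVec PS)) - JD PD‖ ^ 2
          + ‖Jh (Ah⁻¹.mulVec (Db.mulVec PD)) - JS PS‖ ^ 2 := by
    intro PD PS
    set u := A⁻¹.mulVec (Sb.mulVec PS) with hu
    set v := Ah⁻¹.mulVec (Db.mulVec PD) with hv
    have t1 : PD ⬝ᵥ (Dbᵀ * (Ah⁻¹)ᵀ * Gh * Ah⁻¹ * Db).mulVec PD = ⟪Jh v, Jh v⟫ := by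
      rw [show (Dbᵀ * (Ah⁻¹)ᵀ * Gh * Ah⁻¹ * Db).mulVec PD
          = Dbᵀ.mulVec ((Ah⁻¹)ᵀ.mulVec (Gh.mulVec (Ah⁻¹.mulVec (Db.mulVec PD)))) by
        simp [Matrix.mulVec_mulVec, Matrix.mul_assoc]]
      rw [dot_transpose_mulVec, dot_transpose_mulVec, ← hv]
      exact dot_gram Jh Jh hGh v v
    have t2 : PD ⬝ᵥ MD.mulVec PD = ⟪JD PD, JD PD⟫ := dot_gram JD JD hMD PD PD
    have t3 : PD ⬝ᵥ (Dᵀ * A⁻¹ * Sb).mulVec PS = ⟪R u, JD PD⟫ := by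
      rw [show (Dᵀ * A⁻¹ * Sb).mulVec PS = Dᵀ.mulVec (A⁻¹.mulVec (Sb.mulVec PS)) by
        simp [Matrix.mulVec_mulVec, Matrix.mul_assoc]]
      rw [dot_transpose_mulVec, ← hu, dotProduct_comm]
      exact dot_gram R JD hD u PD
    have t4 : PD ⬝ᵥ (Dbᵀ * (Ah⁻¹)ᵀ * Sh).mulVec PS = ⟪Jh v, JS PS⟫ := by
      rw [show (Dbᵀ * (Ah⁻¹)ᵀ * Sh).mulVec PS
          = Dbᵀ.mulVec ((Ah⁻¹)ᵀ.mulVec (Sh.mulVec PS)) by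
        simp [Matrix.mulVec_mulVec, Matrix.mul_assoc]]
      rw [dot_transpose_mulVec, dot_transpose_mulVec, ← hv]
      exact dot_gram Jh JS hSh v PS
    have t5 : PS ⬝ᵥ (Sbᵀ * (A⁻¹)ᵀ * D).mulVec PD = ⟪R u, JD PD⟫ := by
      rw [show (Sbᵀ * (A⁻¹)ᵀ * D).mulVec PD
          = Sbᵀ.mulVec ((A⁻¹)ᵀ.mulVec (D.mulVec PD)) by
        simp [Matrix.mulVec_mulVec, Matrix.mul_assoc]]
      rw [dot_transpose_mulVec, dot_transpose_mulVec, ← hu]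
      exact dot_gram R JD hD u PD
    have t6 : PS ⬝ᵥ (Shᵀ * Ah⁻¹ * Db).mulVec PD = ⟪Jh v, JS PS⟫ := by
      rw [show (Shᵀ * Ah⁻¹ * Db).mulVec PD = Shᵀ.mulVec (Ah⁻¹.mulVec (Db.mulVec PD)) by
        simp [Matrix.mulVec_mulVec, Matrix.mul_assoc]]
      rw [dot_transpose_mulVec, ← hv, dotProduct_comm]
      exact dot_gram Jh JS hSh v PS
    have t7 : PS ⬝ᵥ (Sbᵀ * (A⁻¹)ᵀ * G * A⁻¹ * Sb).mulVec PS = ⟪R u, R u⟫ := by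
      rw [show (Sbᵀ * (A⁻¹)ᵀ * G * A⁻¹ * Sb).mulVec PS
          = Sbᵀ.mulVec ((A⁻¹)ᵀ.mulVec (G.mulVec (A⁻¹.mulVec (Sb.mulVec PS)))) by
        simp [Matrix.mulVec_mulVec, Matrix.mul_assoc]]
      rw [dot_transpose_mulVec, dot_transpose_mulVec, ← hu]
      exact dot_gram R R hG u u
    have t8 : PS ⬝ᵥ MS.mulVec PS = ⟪JS PS, JS PS⟫ := dot_gram JS JS hMS PS PS
    rw [redMat, Matrix.fromBlocks_mulVec, sumElim_dotProduct_sumElim]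
    simp only [Sum.elim_comp_inl, Sum.elim_comp_inr, Matrix.add_mulVec, Matrix.sub_mulVec,
      Matrix.neg_mulVec, dotProduct_add, dotProduct_sub, dotProduct_neg]
    rw [t1, t2, t3, t4, t5, t6, t7, t8]
    rw [norm_sub_sq_real, norm_sub_sq_real,
      ← real_inner_self_eq_norm_sq, ← real_inner_self_eq_norm_sq,
      ← real_inner_self_eq_norm_sq, ← real_inner_self_eq_norm_sq]
    ring
  have hsemi : (redMat A Ah Sb Db G Gh MD MS D Sh).PosSemidef := by
    refine Matrix.posSemidef_iff_dotProduct_mulVec.mpr ⟨herm, fun x => ?_⟩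
    have hx : x = Sum.elim (x ∘ Sum.inl) (x ∘ Sum.inr) := (Sum.elim_comp_inl_inr x).symm
    rw [star_trivial]
    rw [hx, key]
    positivity
  refine ⟨hsymm, hsemi, fun hnd => Matrix.posDef_iff_dotProduct_mulVec.mpr ⟨herm, fun x hx0 => ?_⟩⟩
  set PD := x ∘ Sum.inl with hPD
  set PS := x ∘ Sum.inr with hPS
  have hx : x = Sum.elim PD PS := (Sum.elim_comp_inl_inr x).symm
  have hpair : (PD, PS) ≠ 0 := by
    intro h
    rw [Prod.mk_eq_zero] at h
    apply hx0
    rw [hx, h.1, h.2]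
    ext (i | i) <;> simp
  rw [star_trivial, hx, key]
  rcases hnd PD PS hpair with h | h
  · have h1 : 0 < ‖R (A⁻¹.mulVec (Sb.mulVec PS)) - JD PD‖ ^ 2 := by
      exact pow_pos (norm_pos_iff.mpr (sub_ne_zero.mpr h)) 2
    have h2 : 0 ≤ ‖Jh (Ah⁻¹.mulVec (Db.mulVec PD)) - JS PS‖ ^ 2 := by positivity
    linarith
  · have h1 : 0 < ‖Jh (Ah⁻¹.mulVec (Db.mulVec PD)) - JS PS‖ ^ 2 := by
      exact pow_pos (norm_pos_iff.mpr (sub_ne_zero.mpr h)) 2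
    have h2 : 0 ≤ ‖R (A⁻¹.mulVec (Sb.mulVec PS)) - JD PD‖ ^ 2 := by positivity
    linarith
end

section
/- For every (ψ_D, ψ_Σ) ∈ V̂ × V̂, the map ψ ↦ J(ψ, ψ_Σ) is Fréchet differentiable at ψ_D, and its derivative in any direction δ ∈ V̂ equals ⟨ E*(E ψ_D − γ u(ψ_Σ)) + D̂* p̂ , δ ⟩_{V̂}, where the adjoint state p̂ ∈ V̂ is the solution of Â* p̂ = E*(E û(ψ_D) − E ψ_Σ). -/
open scoped RealInnerProductSpace

variable {V Vh H : Type*}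
  [NormedAddCommGroup V] [InnerProductSpace ℝ V] [CompleteSpace V]
  [NormedAddCommGroup Vh] [InnerProductSpace ℝ Vh] [CompleteSpace Vh]
  [NormedAddCommGroup H] [InnerProductSpace ℝ H] [CompleteSpace H]

/-- The state `u(ψ_Σ) = A⁻¹(S ψ_Σ + F)`. -/
noncomputable def stateU (A : V ≃L[ℝ] V) (S : Vh →L[ℝ] V) (F : V) (ψS : Vh) : V :=
  A.symm (S ψS + F)

/-- The state `û(ψ_D) = Â⁻¹(D̂ ψ_D + G)`. -/
noncomputable def stateUh (Ah : Vh ≃L[ℝ] Vh) (Dh : Vh →L[ℝ] Vh) (G : Vh) (ψD : Vh) : Vh :=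
  Ah.symm (Dh ψD + G)

/-- The cost functional `J(ψ_D, ψ_Σ) = ½‖γ u(ψ_Σ) − E ψ_D‖² + ½‖E û(ψ_D) − E ψ_Σ‖²`. -/
noncomputable def costJ (γ : V →L[ℝ] H) (E : Vh →L[ℝ] H)
    (A : V ≃L[ℝ] V) (Ah : Vh ≃L[ℝ] Vh) (S : Vh →L[ℝ] V) (Dh : Vh →L[ℝ] Vh)
    (F : V) (G : Vh) (ψD ψS : Vh) : ℝ :=
  (1 / 2) * ‖γ (stateU A S F ψS) - E ψD‖ ^ 2
    + (1 / 2) * ‖E (stateUh Ah Dh G ψD) - E ψS‖ ^ 2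

/-- The map `ψ ↦ J(ψ, ψ_Σ)` is Fréchet differentiable at `ψ_D`, with
derivative `δ ↦ ⟨E*(E ψ_D − γ u(ψ_Σ)) + D̂* p̂, δ⟩`, where `Â* p̂ = E*(E û(ψ_D) − E ψ_Σ)`. -/
theorem costJ_hasFDerivAt_psiD (γ : V →L[ℝ] H) (E : Vh →L[ℝ] H)
    (A : V ≃L[ℝ] V) (Ah : Vh ≃L[ℝ] Vh) (S : Vh →L[ℝ] V) (Dh : Vh →L[ℝ] Vh)
    (F : V) (G : Vh) (ψD ψS : Vh) (ph : Vh)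
    (hph : ContinuousLinearMap.adjoint (Ah : Vh →L[ℝ] Vh) ph
        = ContinuousLinearMap.adjoint E (E (stateUh Ah Dh G ψD) - E ψS)) :
    HasFDerivAt (fun ψ => costJ γ E A Ah S Dh F G ψ ψS)
      (innerSL ℝ (ContinuousLinearMap.adjoint E (E ψD - γ (stateU A S F ψS))
        + ContinuousLinearMap.adjoint Dh ph)) ψD := by
  set u := γ (stateU A S F ψS) with hu
  have h1 : HasFDerivAt (fun ψ : Vh => u - E ψ) (-E) ψD := by
    exact ((hasFDerivAt_const u ψD).sub E.hasFDerivAt).congr_fderiv (zero_sub _)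
  have hL : HasFDerivAt (fun ψ : Vh => E (stateUh Ah Dh G ψ) - E ψS)
      (E.comp ((Ah.symm : Vh →L[ℝ] Vh).comp Dh)) ψD := by
    have h0 : HasFDerivAt (fun ψ : Vh => Dh ψ + G) (Dh : Vh →L[ℝ] Vh) ψD :=
      Dh.hasFDerivAt.add_const G
    have h2 := ((Ah.symm : Vh →L[ℝ] Vh).hasFDerivAt.comp ψD h0)
    have h3 := (E.hasFDerivAt.comp ψD h2).sub_const (E ψS)
    simpa [stateUh, Function.comp] using h3
  have hJ := (((h1.inner ℝ h1).const_mul ((1:ℝ)/2)).add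
      ((hL.inner ℝ hL).const_mul ((1:ℝ)/2)))
  have hfun : (fun ψ : Vh => (1/2 : ℝ) * ⟪u - E ψ, u - E ψ⟫ +
      (1/2 : ℝ) * ⟪E (stateUh Ah Dh G ψ) - E ψS, E (stateUh Ah Dh G ψ) - E ψS⟫)
      = fun ψ => costJ γ E A Ah S Dh F G ψ ψS := by
    funext ψ
    simp [costJ, real_inner_self_eq_norm_sq, hu]
  rw [← hfun]
  refine hJ.congr_fderiv ?_
  ext δ
  simp only [ContinuousLinearMap.add_apply, ContinuousLinearMap.coe_smul',
    Pi.smul_apply, ContinuousLinearMap.comp_apply, fderivInnerCLM_apply,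
    ContinuousLinearMap.prod_apply, ContinuousLinearMap.neg_apply,
    innerSL_apply_apply, smul_eq_mul]
  have e1 : ⟪u - E ψD, -(E δ)⟫ = ⟪ContinuousLinearMap.adjoint E (E ψD - u), δ⟫ := by
    rw [ContinuousLinearMap.adjoint_inner_left]
    rw [inner_neg_right, ← inner_neg_left]
    simp
  have e2 : ⟪E (stateUh Ah Dh G ψD) - E ψS, E ((Ah.symm : Vh →L[ℝ] Vh) (Dh δ))⟫
      = ⟪ContinuousLinearMap.adjoint Dh ph, δ⟫ := by
    rw [← ContinuousLinearMap.adjoint_inner_left E, ← hph,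
      ContinuousLinearMap.adjoint_inner_left, ContinuousLinearMap.adjoint_inner_left]
    simp
  rw [inner_add_left, ← e1, ← e2, real_inner_comm (u - E ψD) (-(E δ)),
    real_inner_comm (E (stateUh Ah Dh G ψD) - E ψS)]
  ring
end

section
/- For every (ψ_D, ψ_Σ) ∈ V̂ × V̂, the map ψ ↦ J(ψ_D, ψ) is Fréchet differentiable at ψ_Σ, and its derivative in any direction δ ∈ V̂ equals ⟨ E*(E ψ_Σ − E û(ψ_D)) + S* p , δ ⟩_{V̂}, where the adjoint state p ∈ V is the solution of A* p = γ*(γ u(ψ_Σ) − E ψ_D). -/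
open scoped RealInnerProductSpace

variable {V Vh H : Type*}
  [NormedAddCommGroup V] [InnerProductSpace ℝ V] [CompleteSpace V]
  [NormedAddCommGroup Vh] [InnerProductSpace ℝ Vh] [CompleteSpace Vh]
  [NormedAddCommGroup H] [InnerProductSpace ℝ H] [CompleteSpace H]

/-- The map `ψ ↦ J(ψ_D, ψ)` is Fréchet differentiable at `ψ_Σ`, with
derivative `δ ↦ ⟨E*(E ψ_Σ − E û(ψ_D)) + S* p, δ⟩`, where `A* p = γ*(γ u(ψ_Σ) − E ψ_D)`. -/
theorem costJ_hasFDerivAt_psiS (γ : V →L[ℝ] H) (E : Vh →L[ℝ] H)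
    (A : V ≃L[ℝ] V) (Ah : Vh ≃L[ℝ] Vh) (S : Vh →L[ℝ] V) (Dh : Vh →L[ℝ] Vh)
    (F : V) (G : Vh) (ψD ψS : Vh) (p : V)
    (hp : ContinuousLinearMap.adjoint (A : V →L[ℝ] V) p
        = ContinuousLinearMap.adjoint γ (γ (stateU A S F ψS) - E ψD)) :
    HasFDerivAt (fun ψ => costJ γ E A Ah S Dh F G ψD ψ)
      (innerSL ℝ (ContinuousLinearMap.adjoint E (E ψS - E (stateUh Ah Dh G ψD))
        + ContinuousLinearMap.adjoint S p)) ψS := by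
  -- first summand: ψ ↦ γ (A.symm (S ψ + F)) - E ψD
  set L1 : Vh →L[ℝ] H := γ.comp ((A.symm : V →L[ℝ] V).comp S) with hL1
  have h1 : HasFDerivAt (fun ψ : Vh => γ (stateU A S F ψ) - E ψD) L1 ψS := by
    have : HasFDerivAt (fun ψ : Vh => γ (A.symm (S ψ + F)) - E ψD) L1 ψS := by
      have hin : HasFDerivAt (fun ψ : Vh => S ψ + F) S ψS :=
        (S.hasFDerivAt).add_const F
      have := (γ.hasFDerivAt.comp _ ((A.symm : V →L[ℝ] V).hasFDerivAt.comp _ hin)).sub_const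
        (E ψD)
      simpa [hL1, ContinuousLinearMap.comp_assoc] using this
    simpa [stateU] using this
  set L2 : Vh →L[ℝ] H := -E with hL2
  have h2 : HasFDerivAt (fun ψ : Vh => E (stateUh Ah Dh G ψD) - E ψ) L2 ψS := by
    simpa [hL2] using (E.hasFDerivAt.const_sub (E (stateUh Ah Dh G ψD)) :
      HasFDerivAt (fun ψ : Vh => E (stateUh Ah Dh G ψD) - E ψ) (-E) ψS)
  have hJ := ((h1.norm_sq.const_mul ((1:ℝ)/2)).add (h2.norm_sq.const_mul ((1:ℝ)/2)))
  have key : ((1:ℝ)/2) • (2 • (innerSL ℝ (γ (stateU A S F ψS) - E ψD)).comp L1)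
      + ((1:ℝ)/2) • (2 • (innerSL ℝ (E (stateUh Ah Dh G ψD) - E ψS)).comp L2)
      = innerSL ℝ (ContinuousLinearMap.adjoint E (E ψS - E (stateUh Ah Dh G ψD))
        + ContinuousLinearMap.adjoint S p) := by
    ext δ
    have e1 : ⟪γ (stateU A S F ψS) - E ψD, L1 δ⟫ = ⟪ContinuousLinearMap.adjoint S p, δ⟫ := by
      calc ⟪γ (stateU A S F ψS) - E ψD, L1 δ⟫
          = ⟪ContinuousLinearMap.adjoint γ (γ (stateU A S F ψS) - E ψD), A.symm (S δ)⟫ := by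
            rw [ContinuousLinearMap.adjoint_inner_left]; simp [hL1]
        _ = ⟪ContinuousLinearMap.adjoint (A : V →L[ℝ] V) p, A.symm (S δ)⟫ := by rw [hp]
        _ = ⟪p, (A : V →L[ℝ] V) (A.symm (S δ))⟫ := by
            rw [ContinuousLinearMap.adjoint_inner_left]
        _ = ⟪p, S δ⟫ := by simp
        _ = ⟪ContinuousLinearMap.adjoint S p, δ⟫ := by
            rw [ContinuousLinearMap.adjoint_inner_left]
    have e2 : ⟪E (stateUh Ah Dh G ψD) - E ψS, L2 δ⟫
        = ⟪ContinuousLinearMap.adjoint E (E ψS - E (stateUh Ah Dh G ψD)), δ⟫ := by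
      rw [ContinuousLinearMap.adjoint_inner_left]
      simp [hL2, inner_sub_left, inner_neg_right]
    simp only [ContinuousLinearMap.add_apply, ContinuousLinearMap.smul_apply,
      ContinuousLinearMap.coe_smul', Pi.smul_apply, ContinuousLinearMap.coe_comp',
      Function.comp_apply, innerSL_apply_apply, inner_add_left]
    rw [e1, e2]
    simp only [smul_eq_mul]
    ring
  have : HasFDerivAt (fun ψ => costJ γ E A Ah S Dh F G ψD ψ)
      (((1:ℝ)/2) • (2 • (innerSL ℝ (γ (stateU A S F ψS) - E ψD)).comp L1)
      + ((1:ℝ)/2) • (2 • (innerSL ℝ (E (stateUh Ah Dh G ψD) - E ψS)).comp L2)) ψS := by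
    exact hJ
  rwa [key] at this
end

section
/- Suppose (ψ_D, ψ_Σ) ∈ V̂ × V̂ is a minimizer of J over V̂ × V̂ (it suffices that it is a local minimizer). Then the first-order optimality conditions hold: E*(E ψ_D − γ u(ψ_Σ)) + D̂* p̂ = 0 and E*(E ψ_Σ − E û(ψ_D)) + S* p = 0, where p ∈ V and p̂ ∈ V̂ are the adjoint states solving A* p = γ*(γ u(ψ_Σ) − E ψ_D) and Â* p̂ = E*(E û(ψ_D) − E ψ_Σ). -/
open scoped RealInnerProductSpace

variable {V Vh H : Type*}
  [NormedAddCommGroup V] [InnerProductSpace ℝ V] [CompleteSpace V]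
  [NormedAddCommGroup Vh] [InnerProductSpace ℝ Vh] [CompleteSpace Vh]
  [NormedAddCommGroup H] [InnerProductSpace ℝ H] [CompleteSpace H]

lemma half_normSq_hasFDerivAt {W H : Type*}
    [NormedAddCommGroup W] [NormedSpace ℝ W]
    [NormedAddCommGroup H] [InnerProductSpace ℝ H]
    (T : W →L[ℝ] H) (c : H) (q : W) :
    HasFDerivAt (fun x => (1 / 2 : ℝ) * ‖T x + c‖ ^ 2)
      ((innerSL ℝ (T q + c)).comp T) q := by
  have hf : HasFDerivAt (fun x => T x + c) T q := T.hasFDerivAt.add_const c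
  have h := (hf.inner ℝ hf).const_mul (1 / 2 : ℝ)
  have heq : (fun x => (1 / 2 : ℝ) * ⟪T x + c, T x + c⟫)
      = fun x => (1 / 2 : ℝ) * ‖T x + c‖ ^ 2 := by
    funext x; rw [real_inner_self_eq_norm_sq]
  rw [heq] at h
  convert h using 1
  case e'_8 => rfl
  case e'_9 => rfl
  ext v
  simp only [ContinuousLinearMap.coe_comp', Function.comp_apply, innerSL_apply_apply,
    ContinuousLinearMap.smul_apply, fderivInnerCLM_apply, ContinuousLinearMap.prod_apply,
    smul_eq_mul]
  rw [real_inner_comm (T v)]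
  ring

set_option maxHeartbeats 1000000 in
/-- If `(ψ_D, ψ_Σ)` is a (local) minimizer of `J`, then the first-order
optimality conditions hold: `E*(E ψ_D − γ u(ψ_Σ)) + D̂* p̂ = 0` and
`E*(E ψ_Σ − E û(ψ_D)) + S* p = 0`, with adjoint states
`A* p = γ*(γ u(ψ_Σ) − E ψ_D)` and `Â* p̂ = E*(E û(ψ_D) − E ψ_Σ)`. -/
theorem costJ_first_order_optimality (γ : V →L[ℝ] H) (E : Vh →L[ℝ] H)
    (A : V ≃L[ℝ] V) (Ah : Vh ≃L[ℝ] Vh) (S : Vh →L[ℝ] V) (Dh : Vh →L[ℝ] Vh)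
    (F : V) (G : Vh) (ψD ψS : Vh)
    (hmin : IsLocalMin (fun q : Vh × Vh => costJ γ E A Ah S Dh F G q.1 q.2) (ψD, ψS))
    (p : V) (ph : Vh)
    (hp : ContinuousLinearMap.adjoint (A : V →L[ℝ] V) p
        = ContinuousLinearMap.adjoint γ (γ (stateU A S F ψS) - E ψD))
    (hph : ContinuousLinearMap.adjoint (Ah : Vh →L[ℝ] Vh) ph
        = ContinuousLinearMap.adjoint E (E (stateUh Ah Dh G ψD) - E ψS)) :
    ContinuousLinearMap.adjoint E (E ψD - γ (stateU A S F ψS))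
        + ContinuousLinearMap.adjoint Dh ph = 0 ∧
    ContinuousLinearMap.adjoint E (E ψS - E (stateUh Ah Dh G ψD))
        + ContinuousLinearMap.adjoint S p = 0 := by
  classical
  set T₁ : Vh × Vh →L[ℝ] H :=
    (γ.comp (((A.symm : V ≃L[ℝ] V) : V →L[ℝ] V).comp S)).comp
        (ContinuousLinearMap.snd ℝ Vh Vh)
      - E.comp (ContinuousLinearMap.fst ℝ Vh Vh) with hT₁
  set T₂ : Vh × Vh →L[ℝ] H :=
    (E.comp (((Ah.symm : Vh ≃L[ℝ] Vh) : Vh →L[ℝ] Vh).comp Dh)).comp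
        (ContinuousLinearMap.fst ℝ Vh Vh)
      - E.comp (ContinuousLinearMap.snd ℝ Vh Vh) with hT₂
  set c₁ : H := γ (A.symm F) with hc₁
  set c₂ : H := E (Ah.symm G) with hc₂
  have hfun : (fun q : Vh × Vh => costJ γ E A Ah S Dh F G q.1 q.2)
      = fun q => (1 / 2 : ℝ) * ‖T₁ q + c₁‖ ^ 2 + (1 / 2 : ℝ) * ‖T₂ q + c₂‖ ^ 2 := by
    funext q
    simp only [costJ, stateU, stateUh, hT₁, hT₂, hc₁, hc₂,
      ContinuousLinearMap.sub_apply, ContinuousLinearMap.coe_comp', Function.comp_apply,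
      ContinuousLinearMap.coe_fst', ContinuousLinearMap.coe_snd',
      ContinuousLinearEquiv.coe_coe, map_add]
    have e1 : ∀ a b c : H, a + b - c = a - c + b := fun a b c => by abel
    rw [e1, e1]
  have hT₁v : T₁ (ψD, ψS) + c₁ = γ (stateU A S F ψS) - E ψD := by
    simp [hT₁, hc₁, stateU, map_add]; abel
  have hT₂v : T₂ (ψD, ψS) + c₂ = E (stateUh Ah Dh G ψD) - E ψS := by
    simp [hT₂, hc₂, stateUh, map_add]; abel
  have hder : HasFDerivAt (fun q : Vh × Vh => costJ γ E A Ah S Dh F G q.1 q.2)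
      ((innerSL ℝ (T₁ (ψD, ψS) + c₁)).comp T₁ + (innerSL ℝ (T₂ (ψD, ψS) + c₂)).comp T₂)
      (ψD, ψS) := by
    rw [hfun]
    exact (half_normSq_hasFDerivAt T₁ c₁ _).add (half_normSq_hasFDerivAt T₂ c₂ _)
  have hzero := hmin.hasFDerivAt_eq_zero hder
  set g₀ : H := γ (stateU A S F ψS) - E ψD with hg₀
  set h₀ : H := E (stateUh Ah Dh G ψD) - E ψS with hh₀
  have key : ∀ v : Vh × Vh, ⟪g₀, T₁ v⟫ + ⟪h₀, T₂ v⟫ = 0 := by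
    intro v
    have := congrFun (congrArg DFunLike.coe hzero) v
    simpa [hT₁v, hT₂v] using this
  constructor
  · have hw : ∀ w : Vh,
        ⟪ContinuousLinearMap.adjoint E (E ψD - γ (stateU A S F ψS))
          + ContinuousLinearMap.adjoint Dh ph, w⟫ = 0 := by
      intro w
      have hk := key (w, 0)
      have hT₁w : T₁ (w, 0) = -(E w) := by simp [hT₁]
      have hT₂w : T₂ (w, 0) = E (Ah.symm (Dh w)) := by simp [hT₂]
      rw [hT₁w, hT₂w] at hk
      have hph' : ⟪h₀, E (Ah.symm (Dh w))⟫ = ⟪ph, Dh w⟫ := by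
        rw [← ContinuousLinearMap.adjoint_inner_left E, ← hph,
          ContinuousLinearMap.adjoint_inner_left]
        simp
      rw [hph', inner_neg_right] at hk
      rw [inner_add_left, ContinuousLinearMap.adjoint_inner_left,
        ContinuousLinearMap.adjoint_inner_left]
      have : E ψD - γ (stateU A S F ψS) = -g₀ := by rw [hg₀]; abel
      rw [this, inner_neg_left]
      linarith [hk]
    have := hw (ContinuousLinearMap.adjoint E (E ψD - γ (stateU A S F ψS))
          + ContinuousLinearMap.adjoint Dh ph)
    exact inner_self_eq_zero.mp this
  · have hw : ∀ w : Vh,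
        ⟪ContinuousLinearMap.adjoint E (E ψS - E (stateUh Ah Dh G ψD))
          + ContinuousLinearMap.adjoint S p, w⟫ = 0 := by
      intro w
      have hk := key (0, w)
      have hT₁w : T₁ (0, w) = γ (A.symm (S w)) := by simp [hT₁]
      have hT₂w : T₂ (0, w) = -(E w) := by simp [hT₂]
      rw [hT₁w, hT₂w] at hk
      have hp' : ⟪g₀, γ (A.symm (S w))⟫ = ⟪p, S w⟫ := by
        rw [← ContinuousLinearMap.adjoint_inner_left γ, ← hp,
          ContinuousLinearMap.adjoint_inner_left]
        simp
      rw [hp', inner_neg_right] at hk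
      rw [inner_add_left, ContinuousLinearMap.adjoint_inner_left,
        ContinuousLinearMap.adjoint_inner_left]
      have : E ψS - E (stateUh Ah Dh G ψD) = -h₀ := by rw [hh₀]; abel
      rw [this, inner_neg_left]
      linarith [hk]
    have := hw (ContinuousLinearMap.adjoint E (E ψS - E (stateUh Ah Dh G ψD))
          + ContinuousLinearMap.adjoint S p)
    exact inner_self_eq_zero.mp this
end

section
/- Fix (ψ_D, ψ_Σ) ∈ V̂ × V̂ and let p ∈ V, p̂ ∈ V̂ be the adjoint states solving A* p = γ*(γ u(ψ_Σ) − E ψ_D) and Â* p̂ = E*(E û(ψ_D) − E ψ_Σ). Take the gradient directions δψ_D = E*(E ψ_D − γ u(ψ_Σ)) + D̂* p̂ and δψ_Σ = E*(E ψ_Σ − E û(ψ_D)) + S* p, and set δu = A^{-1} S δψ_Σ, δû = Â^{-1} D̂ δψ_D. Then the first-order coefficient of J along this direction satisfies ⟨γ u(ψ_Σ) − E ψ_D, γ δu − E δψ_D⟩_H + ⟨E û(ψ_D) − E ψ_Σ, E δû − E δψ_Σ⟩_H = ‖δψ_D‖²_{V̂} + ‖δψ_Σ‖²_{V̂}. 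-/
open scoped RealInnerProductSpace

variable {V Vh H : Type*}
  [NormedAddCommGroup V] [InnerProductSpace ℝ V] [CompleteSpace V]
  [NormedAddCommGroup Vh] [InnerProductSpace ℝ Vh] [CompleteSpace Vh]
  [NormedAddCommGroup H] [InnerProductSpace ℝ H] [CompleteSpace H]

/-- For the gradient directions
`δψ_D = E*(E ψ_D − γ u(ψ_Σ)) + D̂* p̂` and `δψ_Σ = E*(E ψ_Σ − E û(ψ_D)) + S* p`, with
`δu = A⁻¹ S δψ_Σ`, `δû = Â⁻¹ D̂ δψ_D`, the first-order coefficient of `J` along this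
direction equals `‖δψ_D‖² + ‖δψ_Σ‖²`. -/
theorem costJ_gradient_direction_identity (γ : V →L[ℝ] H) (E : Vh →L[ℝ] H)
    (A : V ≃L[ℝ] V) (Ah : Vh ≃L[ℝ] Vh) (S : Vh →L[ℝ] V) (Dh : Vh →L[ℝ] Vh)
    (F : V) (G : Vh) (ψD ψS : Vh) (p : V) (ph : Vh)
    (hp : ContinuousLinearMap.adjoint (A : V →L[ℝ] V) p
        = ContinuousLinearMap.adjoint γ (γ (stateU A S F ψS) - E ψD))
    (hph : ContinuousLinearMap.adjoint (Ah : Vh →L[ℝ] Vh) ph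
        = ContinuousLinearMap.adjoint E (E (stateUh Ah Dh G ψD) - E ψS))
    (δψD δψS : Vh)
    (hδψD : δψD = ContinuousLinearMap.adjoint E (E ψD - γ (stateU A S F ψS))
        + ContinuousLinearMap.adjoint Dh ph)
    (hδψS : δψS = ContinuousLinearMap.adjoint E (E ψS - E (stateUh Ah Dh G ψD))
        + ContinuousLinearMap.adjoint S p) :
    ⟪γ (stateU A S F ψS) - E ψD, γ (A.symm (S δψS)) - E δψD⟫
      + ⟪E (stateUh Ah Dh G ψD) - E ψS, E (Ah.symm (Dh δψD)) - E δψS⟫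
      = ‖δψD‖ ^ 2 + ‖δψS‖ ^ 2 := by
  set r := γ (stateU A S F ψS) - E ψD with hr
  set s := E (stateUh Ah Dh G ψD) - E ψS with hs
  have h1 : ⟪r, γ (A.symm (S δψS))⟫ = ⟪ContinuousLinearMap.adjoint S p, δψS⟫ := by
    rw [← ContinuousLinearMap.adjoint_inner_left γ, ← hp,
      ContinuousLinearMap.adjoint_inner_left]
    simp [ContinuousLinearMap.adjoint_inner_left]
  have h2 : ⟪s, E (Ah.symm (Dh δψD))⟫ = ⟪ContinuousLinearMap.adjoint Dh ph, δψD⟫ := by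
    rw [← ContinuousLinearMap.adjoint_inner_left E, ← hph,
      ContinuousLinearMap.adjoint_inner_left]
    simp [ContinuousLinearMap.adjoint_inner_left]
  have h3 : ⟪r, E δψD⟫ = ⟪ContinuousLinearMap.adjoint E r, δψD⟫ := by
    rw [ContinuousLinearMap.adjoint_inner_left]
  have h4 : ⟪s, E δψS⟫ = ⟪ContinuousLinearMap.adjoint E s, δψS⟫ := by
    rw [ContinuousLinearMap.adjoint_inner_left]
  have hD : δψD = -(ContinuousLinearMap.adjoint E r) + ContinuousLinearMap.adjoint Dh ph := by
    rw [hδψD, hr, map_sub, map_sub]; abel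
  have hS' : δψS = -(ContinuousLinearMap.adjoint E s) + ContinuousLinearMap.adjoint S p := by
    rw [hδψS, hs, map_sub, map_sub]; abel
  set a := ContinuousLinearMap.adjoint E r
  set b := ContinuousLinearMap.adjoint Dh ph
  set c := ContinuousLinearMap.adjoint E s
  set d := ContinuousLinearMap.adjoint S p
  rw [inner_sub_right, inner_sub_right, h1, h2, h3, h4,
    ← real_inner_self_eq_norm_sq δψD, ← real_inner_self_eq_norm_sq δψS]
  rw [hD, hS']
  simp only [inner_add_left, inner_add_right, inner_neg_left, inner_neg_right]
  linarith [real_inner_comm a b, real_inner_comm c d]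
end
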